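/- arXiv:2306.00615 — 6 statements merged into one kernel-verified Lean document; each statement's English description precedes it below -/
import Mathlib

section
/- Let Π be a standard deterministic protocol solving KW_f ⋄ MUX_n for some non-constant f:{0,1}^m→{0,1} and n∈ℕ, and let π₁ be a transcript of Π such that V_{π₁}≠∅ and χ(G_{π₁}) ≥ 2. Then the depth of Π is at least |π₁| + log₂ log₂ χ(G_{π₁}) − 2. -/
/-! ### Basic objects: Boolean functions, matrices, compositions -/

/-- Boolean functions on `n`-bit strings. -/
abbrev BFunc (n : ℕ) : Type := (Fin n → Bool) → Bool

/-- Boolean `m × n` matrices, viewed as tuples of rows. -/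
abbrev BMat (m n : ℕ) : Type := Fin m → Fin n → Bool

/-- The column vector obtained by applying `g` to every row of `X`. -/
def gRows {m n : ℕ} (g : BFunc n) (X : BMat m n) : Fin m → Bool := fun i => g (X i)

/-- The composition `f ⋄ g` applied to a matrix `X`. -/
def compFG {m n : ℕ} (f : BFunc m) (g : BFunc n) (X : BMat m n) : Bool := f (gRows g X)

/-- A Boolean function is non-constant. -/
def NonConst {k : ℕ} (f : BFunc k) : Prop := (∃ x, f x = true) ∧ (∃ x, f x = false)

/-- A Boolean function on `n` bits is balanced if it has exactly `2^(n-1)` ones. -/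
def IsBalanced {n : ℕ} (g : BFunc n) : Prop := {x | g x = true}.ncard = 2 ^ (n - 1)

/-- The set `V₀` of balanced functions. -/
def BalancedFuncs (n : ℕ) : Set (BFunc n) := {g | IsBalanced g}

/-- The set of matrices `X` with `g(X) = a`. -/
def ginv {m n : ℕ} (g : BFunc n) (a : Fin m → Bool) : Set (BMat m n) := {X | gRows g X = a}

/-! ### De Morgan formulas and formula complexity -/

/-- De Morgan formulas over `m` variables: leaves are literals, gates are AND/OR. -/
inductive DMF (m : ℕ) : Type where
  | lit (i : Fin m) (pos : Bool)
  | and (l r : DMF m)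
  | or (l r : DMF m)

namespace DMF

/-- Size of a formula: its number of leaves. -/
def size {m : ℕ} : DMF m → ℕ
  | lit _ _ => 1
  | and l r => l.size + r.size
  | or l r => l.size + r.size

/-- Evaluation of a formula. -/
def eval {m : ℕ} : DMF m → (Fin m → Bool) → Bool
  | lit i pos, x => if pos then x i else !(x i)
  | and l r, x => l.eval x && r.eval x
  | or l r, x => l.eval x || r.eval x

end DMF

/-- `L(f)`: the minimal size of a de Morgan formula computing `f`. -/
noncomputable def Lfun {m : ℕ} (f : BFunc m) : ℕ :=
  sInf {s | ∃ φ : DMF m, φ.size = s ∧ ∀ x, φ.eval x = f x}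

/-- `L(A × B)`: the minimal size of a de Morgan formula separating `A` from `B`
(`0` if `A` or `B` is empty). -/
noncomputable def Lrect {m : ℕ} (A B : Set (Fin m → Bool)) : ℕ :=
  open Classical in
  if A.Nonempty ∧ B.Nonempty then
    sInf {s | ∃ φ : DMF m, φ.size = s ∧
      (∀ a ∈ A, φ.eval a = true) ∧ (∀ b ∈ B, φ.eval b = false)}
  else 0

/-! ### Deterministic communication protocols -/

/-- A deterministic communication protocol tree: at each internal vertex the
indicated player sends a bit determined by her input. -/
inductive Prot (X Y O : Type) : Type where
  | leaf (o : O)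
  | alice (s : X → Bool) (c : Bool → Prot X Y O)
  | bob (s : Y → Bool) (c : Bool → Prot X Y O)

namespace Prot

variable {X Y O : Type}

/-- Depth of a protocol tree. -/
def depth : Prot X Y O → ℕ
  | leaf _ => 0
  | alice _ c => 1 + max (c false).depth (c true).depth
  | bob _ c => 1 + max (c false).depth (c true).depth

/-- Running a protocol on a pair of inputs. -/
def run : Prot X Y O → X → Y → O
  | leaf o, _, _ => o
  | alice s c, x, y => (c (s x)).run x y
  | bob s c, x, y => (c (s y)).run x y

/-- A protocol solves a relation if on every input pair it outputs a valid solution. -/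
def Solves (p : Prot X Y O) (R : X → Y → O → Prop) : Prop :=
  ∀ x y, R x y (p.run x y)

/-- Alice's input `x` is consistent with the transcript `tr`. -/
def ConsA : Prot X Y O → List Bool → X → Prop
  | _, [], _ => True
  | leaf _, _ :: _, _ => False
  | alice s c, b :: tr, x => s x = b ∧ ConsA (c b) tr x
  | bob _ c, b :: tr, x => ConsA (c b) tr x

/-- Bob's input `y` is consistent with the transcript `tr`. -/
def ConsB : Prot X Y O → List Bool → Y → Prop
  | _, [], _ => True
  | leaf _, _ :: _, _ => False
  | alice _ c, b :: tr, y => ConsB (c b) tr y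
  | bob s c, b :: tr, y => s y = b ∧ ConsB (c b) tr y

/-- `tr` is a (possibly partial) transcript of `p`: each player has a consistent input. -/
def IsTranscript (p : Prot X Y O) (tr : List Bool) : Prop :=
  (∃ x, ConsA p tr x) ∧ (∃ y, ConsB p tr y)

end Prot

/-- `C(R)`: the deterministic communication complexity of a relation. -/
noncomputable def CC {X Y O : Type} (R : X → Y → O → Prop) : ℕ :=
  sInf {d | ∃ p : Prot X Y O, p.Solves R ∧ p.depth = d}

/-! ### Karchmer–Wigderson compositions and multiplexor compositions -/

/-- The relation `KW_f ⋄ KW_g`. -/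
def KWdiam {m n : ℕ} (f : BFunc m) (g : BFunc n) :
    {X : BMat m n // compFG f g X = true} → {Y : BMat m n // compFG f g Y = false} →
      Fin m × Fin n → Prop :=
  fun X Y o => X.1 o.1 o.2 ≠ Y.1 o.1 o.2

/-- The strong composition `KW_f ⊛ KW_g`. -/
def KWstrong {m n : ℕ} (f : BFunc m) (g : BFunc n) :
    {X : BMat m n // compFG f g X = true} → {Y : BMat m n // compFG f g Y = false} →
      Fin m × Fin n → Prop :=
  fun X Y o => X.1 o.1 o.2 ≠ Y.1 o.1 o.2 ∧ g (X.1 o.1) ≠ g (Y.1 o.1)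

/-- Alice's inputs in the multiplexor compositions: a function `g` and a matrix `X`
with `(f ⋄ g)(X) = 1`. -/
def AliceMux (m n : ℕ) (f : BFunc m) : Type :=
  {p : BFunc n × BMat m n // compFG f p.1 p.2 = true}

/-- Bob's inputs in the multiplexor compositions. -/
def BobMux (m n : ℕ) (f : BFunc m) : Type :=
  {p : BFunc n × BMat m n // compFG f p.1 p.2 = false}

/-- The relation `KW_f ⋄ MUX_n` (output `none` plays the role of `⊥`). -/
def MuxDiam {m n : ℕ} (f : BFunc m) :
    AliceMux m n f → BobMux m n f → Option (Fin m × Fin n) → Prop :=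
  fun x y o =>
    match o with
    | none => x.1.1 ≠ y.1.1
    | some (i, j) => x.1.2 i j ≠ y.1.2 i j

/-- The strong multiplexor composition `KW_f ⊛ MUX_n`. -/
def MuxStrong {m n : ℕ} (f : BFunc m) :
    AliceMux m n f → BobMux m n f → Option (Fin m × Fin n) → Prop :=
  fun x y o =>
    match o with
    | none => x.1.1 ≠ y.1.1
    | some (i, j) => x.1.2 i j ≠ y.1.2 i j ∧ x.1.1 (x.1.2 i) ≠ y.1.1 (y.1.2 i)

/-- The function part of Alice's multiplexor input. -/
def muxGA {m n : ℕ} {f : BFunc m} (x : AliceMux m n f) : BFunc n := x.1.1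

/-- The function part of Bob's multiplexor input. -/
def muxGB {m n : ℕ} {f : BFunc m} (y : BobMux m n f) : BFunc n := y.1.1

/-! ### Half-duplex protocols with adversary -/

/-- One player's tree in a half-duplex protocol: at each internal vertex, the
player's input determines whether she sends a bit (`some b`) or receives (`none`);
the four children are indexed by (isSend, bit). -/
inductive HDTree (X O : Type) : Type where
  | leaf (o : O)
  | node (act : X → Option Bool) (child : Bool → Bool → HDTree X O)

namespace HDTree

variable {X O : Type}

/-- The tree is full of depth `d`: every leaf is at distance exactly `d` from the root. -/
inductive IsFull : HDTree X O → ℕ → Prop where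
  | leaf (o : O) : IsFull (leaf o) 0
  | node {act : X → Option Bool} {child : Bool → Bool → HDTree X O} {d : ℕ}
      (h : ∀ s b, IsFull (child s b) d) : IsFull (node act child) (d + 1)

/-- The input `x` is consistent with the transcript `tr`: there is a vertex at
depth `|tr|` reachable on `x` along edges labeled `send(trᵢ)` or `receive(trᵢ)`. -/
def Cons : HDTree X O → List Bool → X → Prop
  | _, [], _ => True
  | leaf _, _ :: _, _ => False
  | node act child, b :: tr, x =>
      match act x with
      | some c => c = b ∧ Cons (child true b) tr x
      | none => Cons (child false b) tr x

end HDTree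

/-- One round of a half-duplex execution; `ab` are the bits delivered by the
adversary in case the round is silent. -/
def hdStep {X Y O : Type} (tA : HDTree X O) (tB : HDTree Y O) (x : X) (y : Y)
    (ab : Bool × Bool) : HDTree X O × HDTree Y O :=
  match tA, tB with
  | HDTree.node actA chA, HDTree.node actB chB =>
      ⟨match actA x with
        | some b => chA true b
        | none => chA false ((actB y).getD ab.1),
       match actB y with
        | some b => chB true b
        | none => chB false ((actA x).getD ab.2)⟩
  | tA, tB => (tA, tB)

/-- Running a half-duplex execution for `d` rounds against the adversary `adv`. -/
def hdRun {X Y O : Type} :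
    ℕ → (ℕ → Bool × Bool) → HDTree X O → HDTree Y O → X → Y → HDTree X O × HDTree Y O
  | 0, _, tA, tB, _, _ => (tA, tB)
  | d + 1, adv, tA, tB, x, y =>
      hdRun d (fun i => adv (i + 1)) (hdStep tA tB x y (adv 0)).1 (hdStep tA tB x y (adv 0)).2 x y

/-- The current round is classical: exactly one of the players sends. -/
def ClassicalRound {X Y O : Type} (tA : HDTree X O) (tB : HDTree Y O) (x : X) (y : Y) : Prop :=
  match tA, tB with
  | HDTree.node actA _, HDTree.node actB _ => (actA x).isSome ≠ (actB y).isSome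
  | _, _ => True

/-- All rounds of the `d`-round execution on `(x, y)` against `adv` are classical. -/
def AllClassical {X Y O : Type} :
    ℕ → (ℕ → Bool × Bool) → HDTree X O → HDTree Y O → X → Y → Prop
  | 0, _, _, _, _, _ => True
  | d + 1, adv, tA, tB, x, y =>
      ClassicalRound tA tB x y ∧
        AllClassical d (fun i => adv (i + 1)) (hdStep tA tB x y (adv 0)).1
          (hdStep tA tB x y (adv 0)).2 x y

/-- A half-duplex protocol of depth `d`: a pair of full 4-ary trees of depth `d`. -/
structure HDProt (X Y O : Type) (d : ℕ) where
  alice : HDTree X O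
  bob : HDTree Y O
  fullA : alice.IsFull d
  fullB : bob.IsFull d

namespace HDProt

variable {X Y O : Type} {d : ℕ}

/-- The protocol solves the relation `R`: in every execution against every adversary,
both players reach leaves labeled with a common output that is valid for the inputs. -/
def Solves (P : HDProt X Y O d) (R : X → Y → O → Prop) : Prop :=
  ∀ x y adv, ∃ o : O,
    (hdRun d adv P.alice P.bob x y).1 = HDTree.leaf o ∧
    (hdRun d adv P.alice P.bob x y).2 = HDTree.leaf o ∧ R x y o

/-- The protocol is partially half-duplex with respect to the function parts
`gA`, `gB` of the inputs: when `gA x = gB y`, all rounds are classical. -/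
def PartiallyHD {G : Type} (P : HDProt X Y O d) (gA : X → G) (gB : Y → G) : Prop :=
  ∀ x y adv, gA x = gB y → AllClassical d adv P.alice P.bob x y

/-- `tr` is a (possibly partial) transcript of `P`. -/
def IsTranscript (P : HDProt X Y O d) (tr : List Bool) : Prop :=
  (∃ x, P.alice.Cons tr x) ∧ (∃ y, P.bob.Cons tr y)

end HDProt

/-- Partially half-duplex communication complexity of a relation whose inputs carry
function parts `gA`, `gB`. -/
noncomputable def Cphd {X Y O G : Type} (R : X → Y → O → Prop)
    (gA : X → G) (gB : Y → G) : ℕ :=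
  sInf {d | ∃ P : HDProt X Y O d, P.Solves R ∧ P.PartiallyHD gA gB}

/-! ### Transcript sets for multiplexor protocols (half-duplex version) -/

section MuxSetsHD

variable {m n : ℕ} {f : BFunc m} {O : Type} {d : ℕ}

/-- `X_π(g)`: the matrices `X` such that Alice's input `(g, X)` is consistent with `tr`. -/
def XpiHD (P : HDProt (AliceMux m n f) (BobMux m n f) O d) (tr : List Bool)
    (g : BFunc n) : Set (BMat m n) :=
  {X | ∃ h : compFG f g X = true, P.alice.Cons tr ⟨(g, X), h⟩}

/-- `Y_π(g)`: the matrices `Y` such that Bob's input `(g, Y)` is consistent with `tr`. -/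
def YpiHD (P : HDProt (AliceMux m n f) (BobMux m n f) O d) (tr : List Bool)
    (g : BFunc n) : Set (BMat m n) :=
  {Y | ∃ h : compFG f g Y = false, P.bob.Cons tr ⟨(g, Y), h⟩}

/-- `A_π(g)`: the strings `a ∈ f⁻¹(1)` with `X_π(g, a) ≠ ∅`. -/
def ApiHD (P : HDProt (AliceMux m n f) (BobMux m n f) O d) (tr : List Bool)
    (g : BFunc n) : Set (Fin m → Bool) :=
  {a | f a = true ∧ (XpiHD P tr g ∩ ginv g a).Nonempty}

/-- `B_π(g)`: the strings `b ∈ f⁻¹(0)` with `Y_π(g, b) ≠ ∅`. -/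
def BpiHD (P : HDProt (AliceMux m n f) (BobMux m n f) O d) (tr : List Bool)
    (g : BFunc n) : Set (Fin m → Bool) :=
  {b | f b = false ∧ (YpiHD P tr g ∩ ginv g b).Nonempty}

/-- `V_π` (version via nonempty `X_π(g)` and `Y_π(g)`). -/
def VpiHD (P : HDProt (AliceMux m n f) (BobMux m n f) O d) (tr : List Bool) :
    Set (BFunc n) :=
  {g | (XpiHD P tr g).Nonempty ∧ (YpiHD P tr g).Nonempty}

/-- `V_π` (version via nonempty `A_π(g)` and `B_π(g)`). -/
def VpiABHD (P : HDProt (AliceMux m n f) (BobMux m n f) O d) (tr : List Bool) :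
    Set (BFunc n) :=
  {g | (ApiHD P tr g).Nonempty ∧ (BpiHD P tr g).Nonempty}

/-- A transcript `tr` of `P` is `γ`-alive (with the universal constant `κ = 8`). -/
def AliveHD (γ : ℝ) (P : HDProt (AliceMux m n f) (BobMux m n f) O d)
    (tr : List Bool) : Prop :=
  P.IsTranscript tr ∧
  ∃ V : Set (BFunc n), V ⊆ VpiABHD P tr ∧ (∀ g ∈ V, IsBalanced g) ∧
    ((2 : ℝ) ^ (-(m : ℝ)) * ((BalancedFuncs n).ncard : ℝ) ≤ (V.ncard : ℝ)) ∧
    (∀ g ∈ V,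
      (1 - γ) * m + 8 * Real.logb 2 m + 8 ≤
        Real.logb 2 (Lrect (ApiHD P tr g) (BpiHD P tr g))) ∧
    (∀ g ∈ V, ∀ a ∈ ApiHD P tr g,
      (2 : ℝ) ^ (-γ * m + 1) * ((ginv g a).ncard : ℝ) ≤
        ((XpiHD P tr g ∩ ginv g a).ncard : ℝ)) ∧
    (∀ g ∈ V, ∀ b ∈ BpiHD P tr g,
      (2 : ℝ) ^ (-γ * m + 1) * ((ginv g b).ncard : ℝ) ≤
        ((YpiHD P tr g ∩ ginv g b).ncard : ℝ))

/-- The weak intersection property for two functions `gA`, `gB`. -/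
def WeakIntersectHD (P : HDProt (AliceMux m n f) (BobMux m n f) O d) (tr : List Bool)
    (gA gB : BFunc n) : Prop :=
  ∃ X ∈ XpiHD P tr gA, ∃ Y ∈ YpiHD P tr gB,
    ∀ i : Fin m, gA (X i) ≠ gB (Y i) → X i = Y i

/-- The characteristic graph of `tr` for `KW_f ⋄ MUX_n`, on vertex set `V`. -/
def charGraphDiamHD (P : HDProt (AliceMux m n f) (BobMux m n f) O d) (tr : List Bool)
    (V : Set (BFunc n)) : SimpleGraph ↥V where
  Adj gA gB := gA ≠ gB ∧
    ((XpiHD P tr ↑gA ∩ YpiHD P tr ↑gB).Nonempty ∨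
      (XpiHD P tr ↑gB ∩ YpiHD P tr ↑gA).Nonempty)
  symm := by
    constructor
    rintro a b ⟨hne, h⟩
    exact ⟨hne.symm, h.symm⟩
  loopless := by
    constructor
    rintro a ⟨hne, -⟩
    exact hne rfl

/-- The characteristic graph of `tr` for `KW_f ⊛ MUX_n`, on vertex set `V`. -/
def charGraphStrongHD (P : HDProt (AliceMux m n f) (BobMux m n f) O d) (tr : List Bool)
    (V : Set (BFunc n)) : SimpleGraph ↥V where
  Adj gA gB := gA ≠ gB ∧
    (WeakIntersectHD P tr ↑gA ↑gB ∨ WeakIntersectHD P tr ↑gB ↑gA)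
  symm := by
    constructor
    rintro a b ⟨hne, h⟩
    exact ⟨hne.symm, h.symm⟩
  loopless := by
    constructor
    rintro a ⟨hne, -⟩
    exact hne rfl

end MuxSetsHD

/-! ### Transcript sets for multiplexor protocols (standard deterministic version) -/

section MuxSetsP

variable {m n : ℕ} {f : BFunc m} {O : Type}

/-- `X_π(g)` for a standard deterministic protocol. -/
def XpiP (p : Prot (AliceMux m n f) (BobMux m n f) O) (tr : List Bool)
    (g : BFunc n) : Set (BMat m n) :=
  {X | ∃ h : compFG f g X = true, Prot.ConsA p tr ⟨(g, X), h⟩}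

/-- `Y_π(g)` for a standard deterministic protocol. -/
def YpiP (p : Prot (AliceMux m n f) (BobMux m n f) O) (tr : List Bool)
    (g : BFunc n) : Set (BMat m n) :=
  {Y | ∃ h : compFG f g Y = false, Prot.ConsB p tr ⟨(g, Y), h⟩}

/-- `A_π(g)` for a standard deterministic protocol. -/
def ApiP (p : Prot (AliceMux m n f) (BobMux m n f) O) (tr : List Bool)
    (g : BFunc n) : Set (Fin m → Bool) :=
  {a | f a = true ∧ (XpiP p tr g ∩ ginv g a).Nonempty}

/-- `B_π(g)` for a standard deterministic protocol. -/
def BpiP (p : Prot (AliceMux m n f) (BobMux m n f) O) (tr : List Bool)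
    (g : BFunc n) : Set (Fin m → Bool) :=
  {b | f b = false ∧ (YpiP p tr g ∩ ginv g b).Nonempty}

/-- `V_π` (version via nonempty `X_π(g)` and `Y_π(g)`), standard protocols. -/
def VpiPset (p : Prot (AliceMux m n f) (BobMux m n f) O) (tr : List Bool) :
    Set (BFunc n) :=
  {g | (XpiP p tr g).Nonempty ∧ (YpiP p tr g).Nonempty}

/-- `V_π` (version via nonempty `A_π(g)` and `B_π(g)`), standard protocols. -/
def VpiABP (p : Prot (AliceMux m n f) (BobMux m n f) O) (tr : List Bool) :
    Set (BFunc n) :=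
  {g | (ApiP p tr g).Nonempty ∧ (BpiP p tr g).Nonempty}

/-- `γ`-alive transcripts (with `κ = 8`), standard protocols. -/
def AliveP (γ : ℝ) (p : Prot (AliceMux m n f) (BobMux m n f) O)
    (tr : List Bool) : Prop :=
  p.IsTranscript tr ∧
  ∃ V : Set (BFunc n), V ⊆ VpiABP p tr ∧ (∀ g ∈ V, IsBalanced g) ∧
    ((2 : ℝ) ^ (-(m : ℝ)) * ((BalancedFuncs n).ncard : ℝ) ≤ (V.ncard : ℝ)) ∧
    (∀ g ∈ V,
      (1 - γ) * m + 8 * Real.logb 2 m + 8 ≤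
        Real.logb 2 (Lrect (ApiP p tr g) (BpiP p tr g))) ∧
    (∀ g ∈ V, ∀ a ∈ ApiP p tr g,
      (2 : ℝ) ^ (-γ * m + 1) * ((ginv g a).ncard : ℝ) ≤
        ((XpiP p tr g ∩ ginv g a).ncard : ℝ)) ∧
    (∀ g ∈ V, ∀ b ∈ BpiP p tr g,
      (2 : ℝ) ^ (-γ * m + 1) * ((ginv g b).ncard : ℝ) ≤
        ((YpiP p tr g ∩ ginv g b).ncard : ℝ))

/-- The weak intersection property, standard protocols. -/
def WeakIntersectP (p : Prot (AliceMux m n f) (BobMux m n f) O) (tr : List Bool)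
    (gA gB : BFunc n) : Prop :=
  ∃ X ∈ XpiP p tr gA, ∃ Y ∈ YpiP p tr gB,
    ∀ i : Fin m, gA (X i) ≠ gB (Y i) → X i = Y i

/-- The characteristic graph for `KW_f ⋄ MUX_n`, standard protocols. -/
def charGraphDiamP (p : Prot (AliceMux m n f) (BobMux m n f) O) (tr : List Bool)
    (V : Set (BFunc n)) : SimpleGraph ↥V where
  Adj gA gB := gA ≠ gB ∧
    ((XpiP p tr ↑gA ∩ YpiP p tr ↑gB).Nonempty ∨
      (XpiP p tr ↑gB ∩ YpiP p tr ↑gA).Nonempty)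
  symm := by
    constructor
    rintro a b ⟨hne, h⟩
    exact ⟨hne.symm, h.symm⟩
  loopless := by
    constructor
    rintro a ⟨hne, -⟩
    exact hne rfl

/-- The characteristic graph for `KW_f ⊛ MUX_n`, standard protocols. -/
def charGraphStrongP (p : Prot (AliceMux m n f) (BobMux m n f) O) (tr : List Bool)
    (V : Set (BFunc n)) : SimpleGraph ↥V where
  Adj gA gB := gA ≠ gB ∧
    (WeakIntersectP p tr ↑gA ↑gB ∨ WeakIntersectP p tr ↑gB ↑gA)
  symm := by
    constructor
    rintro a b ⟨hne, h⟩
    exact ⟨hne.symm, h.symm⟩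
  loopless := by
    constructor
    rintro a ⟨hne, -⟩
    exact hne rfl

end MuxSetsP

/-! ### Prefix-thick sets, branching structures and winning sets -/

/-- A set of strings indexed by a linearly ordered set `I` is prefix thick with
degree `t`: it has a nonempty subset whose prefix tree has minimum degree
greater than `t` (the children of the depth-`i` vertex given by the prefix of
`x ∈ S'` are the possible values of the next coordinate among elements of `S'`
agreeing with `x` on all earlier coordinates). -/
def RowThick {I A : Type} [LT I] (S : Set (I → A)) (t : ℝ) : Prop :=
  ∃ S' : Set (I → A), S' ⊆ S ∧ S'.Nonempty ∧ ∀ x ∈ S', ∀ i : I,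
    t < (({a : A | ∃ y ∈ S', (∀ j, j < i → y j = x j) ∧ y i = a}).ncard : ℝ)

/-- Prefix thickness for strings over (possibly different) alphabets `A i`,
with a separate degree bound `t i` at each depth. -/
def DepThick {m : ℕ} {A : Fin m → Type} (S : Set (∀ i, A i)) (t : Fin m → ℝ) : Prop :=
  ∃ S' : Set (∀ i, A i), S' ⊆ S ∧ S'.Nonempty ∧ ∀ x ∈ S', ∀ i : Fin m,
    t i < (({a : A i | ∃ y ∈ S', (∀ j, j < i → y j = x j) ∧ y i = a}).ncard : ℝ)

/-- The restriction of a set of matrices to the rows in `I` (ordered as in `[m]`). -/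
def restrictRows {m n : ℕ} (I : Finset (Fin m)) (S : Set (BMat m n)) :
    Set (↥I → (Fin n → Bool)) :=
  (fun X => fun i : ↥I => X i.1) '' S

/-- The restriction of a set of strings to the coordinates in `I` (ordered as in `[m]`). -/
def restrictStr {m : ℕ} {A : Type} (I : Finset (Fin m)) (S : Set (Fin m → A)) :
    Set (↥I → A) :=
  (fun x => fun i : ↥I => x i.1) '' S

/-- `w` is a branching structure of `S`: some nonempty subset `S' ⊆ S` has a prefix
tree in which every vertex at depth `i` has exactly `w i` children. -/
def IsBranching {m : ℕ} {A : Type} (S : Set (Fin m → A)) (w : Fin m → ℕ) : Prop :=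
  ∃ S' : Set (Fin m → A), S' ⊆ S ∧ S'.Nonempty ∧ ∀ x ∈ S', ∀ i : Fin m,
    ({a : A | ∃ y ∈ S', (∀ j, j < i → y j = x j) ∧ y i = a}).ncard = w i

/-- The winning set of `S`: the set of its branching structures. -/
def WinSet {m : ℕ} {A : Type} (S : Set (Fin m → A)) : Set (Fin m → ℕ) :=
  {w | IsBranching S w}

/-! ### Non-deterministic communication complexity -/

/-- There is a non-deterministic protocol for the total function `f` with
witness set of size `k`. -/
def NDProtFor {X Y : Type} (f : X × Y → Bool) (k : ℕ) : Prop :=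
  ∃ a : X → Fin k → Bool, ∃ b : Y → Fin k → Bool,
    ∀ x y, f (x, y) = true ↔ ∃ w, a x w = true ∧ b y w = true

/-- The minimal size of a (nonempty) witness set of a non-deterministic protocol for `f`;
the non-deterministic communication complexity `NCC(f)` is its base-2 logarithm. -/
noncomputable def NCCcard {X Y : Type} (f : X × Y → Bool) : ℕ :=
  sInf {k | 1 ≤ k ∧ NDProtFor f k}

/-- A non-deterministic protocol for the partial problem `GraphIneq_G` with witness
set of size `k`: adjacent pairs are accepted, equal pairs are rejected. -/
def GraphIneqProt {V : Type} (G : SimpleGraph V) (k : ℕ) : Prop :=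
  ∃ a : V → Fin k → Bool, ∃ b : V → Fin k → Bool,
    (∀ u v, G.Adj u v → ∃ w, a u w = true ∧ b v w = true) ∧
    (∀ v, ¬ ∃ w, a v w = true ∧ b v w = true)

/-- The minimal witness-set size of a non-deterministic protocol for `GraphIneq_G`;
`NCC(GraphIneq_G)` is its base-2 logarithm. -/
noncomputable def NCCgraphIneqCard {V : Type} (G : SimpleGraph V) : ℕ :=
  sInf {k | 1 ≤ k ∧ GraphIneqProt G k}

/-- `S` is an independent set of `G`. -/
def IndepIn {V : Type} (G : SimpleGraph V) (S : Set V) : Prop :=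
  ∀ u ∈ S, ∀ v ∈ S, ¬ G.Adj u v


/-! ### Auxiliary material for statement6 -/

namespace Prot

variable {X Y O : Type}

-- NEW material
def trace : Prot X Y O → X → Y → List Bool
  | leaf _, _, _ => []
  | alice s c, x, y => s x :: trace (c (s x)) x y
  | bob s c, x, y => s y :: trace (c (s y)) x y

theorem consA_length : ∀ (p : Prot X Y O) (tr : List Bool) (x : X),
    ConsA p tr x → tr.length ≤ p.depth := by
  intro p
  induction p with
  | leaf o => intro tr x h; cases tr with
    | nil => simp
    | cons b t => exact absurd h (by simp [ConsA])
  | alice s c ih => intro tr x h; cases tr with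
    | nil => simp
    | cons b t =>
      obtain ⟨-, h2⟩ := h
      have := ih b t x h2
      have hle : (c b).depth ≤ max (c false).depth (c true).depth := by
        cases b <;> simp
      simp only [depth, List.length_cons]; omega
  | bob s c ih => intro tr x h; cases tr with
    | nil => simp
    | cons b t =>
      have := ih b t x h
      have hle : (c b).depth ≤ max (c false).depth (c true).depth := by
        cases b <;> simp
      simp only [depth, List.length_cons]; omega

theorem trace_length : ∀ (p : Prot X Y O) (x : X) (y : Y),
    (trace p x y).length ≤ p.depth := by
  intro p
  induction p with
  | leaf o => intro x y; simp [trace, depth]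
  | alice s c ih =>
    intro x y
    have := ih (s x) x y
    have hle : (c (s x)).depth ≤ max (c false).depth (c true).depth := by
      cases hs : s x <;> simp [hs] at this ⊢ <;> omega
    simp only [trace, depth, List.length_cons]; omega
  | bob s c ih =>
    intro x y
    have := ih (s y) x y
    have hle : (c (s y)).depth ≤ max (c false).depth (c true).depth := by
      cases hs : s y <;> simp [hs] at this ⊢ <;> omega
    simp only [trace, depth, List.length_cons]; omega

theorem consA_trace : ∀ (p : Prot X Y O) (x : X) (y : Y), ConsA p (trace p x y) x := by
  intro p
  induction p with
  | leaf o => intro x y; trivial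
  | alice s c ih => intro x y; exact ⟨rfl, ih (s x) x y⟩
  | bob s c ih => intro x y; exact ih (s y) x y

theorem consB_trace : ∀ (p : Prot X Y O) (x : X) (y : Y), ConsB p (trace p x y) y := by
  intro p
  induction p with
  | leaf o => intro x y; trivial
  | alice s c ih => intro x y; exact ih (s x) x y
  | bob s c ih => intro x y; exact ⟨rfl, ih (s y) x y⟩

theorem prefix_trace : ∀ (p : Prot X Y O) (tr : List Bool) (x : X) (y : Y),
    ConsA p tr x → ConsB p tr y → tr <+: trace p x y := by
  intro p
  induction p with
  | leaf o => intro tr x y ha hb; cases tr with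
    | nil => simp
    | cons b t => exact absurd ha (by simp [ConsA])
  | alice s c ih =>
    intro tr x y ha hb; cases tr with
    | nil => simp
    | cons b t =>
      obtain ⟨hb1, ha2⟩ := ha
      subst hb1
      exact List.cons_prefix_cons.mpr ⟨rfl, ih (s x) t x y ha2 hb⟩
  | bob s c ih =>
    intro tr x y ha hb; cases tr with
    | nil => simp
    | cons b t =>
      obtain ⟨hb1, hb2⟩ := hb
      subst hb1
      exact List.cons_prefix_cons.mpr ⟨rfl, ih (s y) t x y ha hb2⟩

theorem run_eq_of_cons : ∀ (p : Prot X Y O) (x : X) (y : Y) (x' : X) (y' : Y),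
    ConsA p (trace p x y) x' → ConsB p (trace p x y) y' →
    run p x' y' = run p x y := by
  intro p
  induction p with
  | leaf o => intro x y x' y' _ _; rfl
  | alice s c ih =>
    intro x y x' y' ha hb
    obtain ⟨h1, h2⟩ := ha
    simp only [run, h1]
    exact ih (s x) x y x' y' h2 hb
  | bob s c ih =>
    intro x y x' y' ha hb
    obtain ⟨h1, h2⟩ := hb
    simp only [run, h1]
    exact ih (s y) x y x' y' ha h2


end Prot

def enc : List Bool → ℕ
  | [] => 1
  | b :: l => 2 * enc l + b.toNat

theorem enc_pos : ∀ l : List Bool, 1 ≤ enc l := by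
  intro l; cases l with
  | nil => simp [enc]
  | cons b t => have := enc_pos t; simp [enc]; omega

theorem enc_lt : ∀ l : List Bool, enc l < 2 ^ (l.length + 1) := by
  intro l
  induction l with
  | nil => simp [enc]
  | cons b t ih =>
    simp only [enc, List.length_cons]
    have : b.toNat ≤ 1 := by cases b <;> simp
    have h2 : 2 ^ (t.length + 1 + 1) = 2 * 2 ^ (t.length + 1) := by ring
    omega

theorem enc_inj : ∀ l1 l2 : List Bool, enc l1 = enc l2 → l1 = l2 := by
  intro l1
  induction l1 with
  | nil =>
    intro l2 h; cases l2 with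
    | nil => rfl
    | cons b t =>
      have := enc_pos t
      have hb : b.toNat ≤ 1 := by cases b <;> simp
      simp [enc] at h; omega
  | cons b t ih =>
    intro l2 h; cases l2 with
    | nil =>
      have := enc_pos t
      have hb : b.toNat ≤ 1 := by cases b <;> simp
      simp [enc] at h; omega
    | cons b' t' =>
      simp only [enc] at h
      have hb : b.toNat ≤ 1 := by cases b <;> simp
      have hb' : b'.toNat ≤ 1 := by cases b' <;> simp
      have h1 : b.toNat = b'.toNat ∧ enc t = enc t' := by omega
      have : b = b' := by cases b <;> cases b' <;> simp_all
      rw [this, ih t' h1.2]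


/-- Alice-side full-transcript consistency sets. -/
def LAp {m n : ℕ} {f : BFunc m} {O : Type} (p : Prot (AliceMux m n f) (BobMux m n f) O)
    (l : List Bool) (g : BFunc n) : Prop :=
  ∃ X, ∃ h : compFG f g X = true, Prot.ConsA p l ⟨(g, X), h⟩

/-- Bob-side full-transcript consistency sets. -/
def LBp {m n : ℕ} {f : BFunc m} {O : Type} (p : Prot (AliceMux m n f) (BobMux m n f) O)
    (l : List Bool) (g : BFunc n) : Prop :=
  ∃ Y, ∃ h : compFG f g Y = false, Prot.ConsB p l ⟨(g, Y), h⟩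

lemma mux_no_mono {m n : ℕ} {f : BFunc m}
    (p : Prot (AliceMux m n f) (BobMux m n f) (Option (Fin m × Fin n)))
    (hsol : p.Solves (MuxDiam f)) (tr : List Bool) (d' : ℕ)
    (hd : p.depth ≤ tr.length + d')
    (gA gB : BFunc n) (Z : BMat m n)
    (h1 : compFG f gA Z = true) (h2 : compFG f gB Z = false)
    (cA : Prot.ConsA p tr ⟨(gA, Z), h1⟩) (cB : Prot.ConsB p tr ⟨(gB, Z), h2⟩)
    (hmono : ∀ s : List Bool, s.length ≤ d' → LAp p (tr ++ s) gA → LAp p (tr ++ s) gB) :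
    False := by
  have hpre := Prot.prefix_trace p tr ⟨(gA, Z), h1⟩ ⟨(gB, Z), h2⟩ cA cB
  obtain ⟨s, hs⟩ := hpre
  have hlen : (Prot.trace p ⟨(gA, Z), h1⟩ ⟨(gB, Z), h2⟩).length ≤ p.depth :=
    Prot.trace_length p _ _
  have hslen : s.length ≤ d' := by
    have := congrArg List.length hs
    simp only [List.length_append] at this
    omega
  have hLA : LAp p (tr ++ s) gA := by
    rw [hs]; exact ⟨Z, h1, Prot.consA_trace p _ _⟩
  obtain ⟨X', h', hX'⟩ := hmono s hslen hLA
  rw [hs] at hX'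
  have hrun := Prot.run_eq_of_cons p ⟨(gA, Z), h1⟩ ⟨(gB, Z), h2⟩ ⟨(gB, X'), h'⟩ ⟨(gB, Z), h2⟩
    hX' (Prot.consB_trace p _ _)
  have ho := hsol ⟨(gA, Z), h1⟩ ⟨(gB, Z), h2⟩
  have ho' := hsol ⟨(gB, X'), h'⟩ ⟨(gB, Z), h2⟩
  rw [hrun] at ho'
  cases hr : p.run ⟨(gA, Z), h1⟩ ⟨(gB, Z), h2⟩ with
  | none => rw [hr] at ho'; exact ho' rfl
  | some ij =>
    obtain ⟨i, j⟩ := ij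
    rw [hr] at ho
    exact ho rfl

lemma mux_no_mono' {m n : ℕ} {f : BFunc m}
    (p : Prot (AliceMux m n f) (BobMux m n f) (Option (Fin m × Fin n)))
    (hsol : p.Solves (MuxDiam f)) (tr : List Bool) (d' : ℕ)
    (hd : p.depth ≤ tr.length + d')
    (gA gB : BFunc n) (Z : BMat m n)
    (h1 : compFG f gB Z = true) (h2 : compFG f gA Z = false)
    (cA : Prot.ConsA p tr ⟨(gB, Z), h1⟩) (cB : Prot.ConsB p tr ⟨(gA, Z), h2⟩)
    (hmono : ∀ s : List Bool, s.length ≤ d' → LBp p (tr ++ s) gA → LBp p (tr ++ s) gB) :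
    False := by
  have hpre := Prot.prefix_trace p tr ⟨(gB, Z), h1⟩ ⟨(gA, Z), h2⟩ cA cB
  obtain ⟨s, hs⟩ := hpre
  have hlen : (Prot.trace p ⟨(gB, Z), h1⟩ ⟨(gA, Z), h2⟩).length ≤ p.depth :=
    Prot.trace_length p _ _
  have hslen : s.length ≤ d' := by
    have := congrArg List.length hs
    simp only [List.length_append] at this
    omega
  have hLB : LBp p (tr ++ s) gA := by
    rw [hs]; exact ⟨Z, h2, Prot.consB_trace p _ _⟩
  obtain ⟨Y', h', hY'⟩ := hmono s hslen hLB
  rw [hs] at hY'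
  have hrun := Prot.run_eq_of_cons p ⟨(gB, Z), h1⟩ ⟨(gA, Z), h2⟩ ⟨(gB, Z), h1⟩ ⟨(gB, Y'), h'⟩
    (Prot.consA_trace p _ _) hY'
  have ho := hsol ⟨(gB, Z), h1⟩ ⟨(gA, Z), h2⟩
  have ho' := hsol ⟨(gB, Z), h1⟩ ⟨(gB, Y'), h'⟩
  rw [hrun] at ho'
  cases hr : p.run ⟨(gB, Z), h1⟩ ⟨(gA, Z), h2⟩ with
  | none => rw [hr] at ho'; exact ho' rfl
  | some ij =>
    obtain ⟨i, j⟩ := ij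
    rw [hr] at ho
    exact ho rfl

theorem statement6 (m n : ℕ) (f : BFunc m) (hf : NonConst f)
    (p : Prot (AliceMux m n f) (BobMux m n f) (Option (Fin m × Fin n)))
    (hsol : p.Solves (MuxDiam f)) (tr : List Bool) (htr : p.IsTranscript tr)
    (hV : (VpiPset p tr).Nonempty)
    (hchi : (2 : ℕ∞) ≤ (charGraphDiamP p tr (VpiPset p tr)).chromaticNumber) :
    (tr.length : ℝ) +
        Real.logb 2 (Real.logb 2
          (((charGraphDiamP p tr (VpiPset p tr)).chromaticNumber.toNat : ℝ))) - 2 ≤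
      (p.depth : ℝ) := by
  classical
  obtain ⟨⟨x0, hx0⟩, -⟩ := htr
  have hlen : tr.length ≤ p.depth := Prot.consA_length p tr x0 hx0
  set d' : ℕ := p.depth - tr.length with hd'
  have hd : p.depth ≤ tr.length + d' := by omega
  set G := charGraphDiamP p tr (VpiPset p tr) with hG
  let col : ↥(VpiPset p tr) → (Fin (2 ^ (d' + 1)) → Bool × Bool) := fun g w =>
    (decide (∃ s : List Bool, enc s = (w : ℕ) ∧ LAp p (tr ++ s) (g : BFunc n)),
     decide (∃ s : List Bool, enc s = (w : ℕ) ∧ LBp p (tr ++ s) (g : BFunc n)))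
  have hvalid : ∀ {a b : ↥(VpiPset p tr)}, G.Adj a b → col a ≠ col b := by
    intro a b hadj hceq
    obtain ⟨hne, hcase⟩ := hadj
    have hmA : ∀ s : List Bool, s.length ≤ d' →
        LAp p (tr ++ s) (a : BFunc n) → LAp p (tr ++ s) (b : BFunc n) := by
      intro s hslen hla
      have hw : enc s < 2 ^ (d' + 1) :=
        lt_of_lt_of_le (enc_lt s) (Nat.pow_le_pow_right (by norm_num) (by omega))
      have hcw := congrFun hceq ⟨enc s, hw⟩
      have h1 := congrArg Prod.fst hcw
      simp only [col, decide_eq_decide] at h1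
      obtain ⟨s', hs', hla'⟩ := h1.mp ⟨s, rfl, hla⟩
      rwa [enc_inj s' s hs'] at hla'
    have hmB : ∀ s : List Bool, s.length ≤ d' →
        LBp p (tr ++ s) (a : BFunc n) → LBp p (tr ++ s) (b : BFunc n) := by
      intro s hslen hlb
      have hw : enc s < 2 ^ (d' + 1) :=
        lt_of_lt_of_le (enc_lt s) (Nat.pow_le_pow_right (by norm_num) (by omega))
      have hcw := congrFun hceq ⟨enc s, hw⟩
      have h1 := congrArg Prod.snd hcw
      simp only [col, decide_eq_decide] at h1
      obtain ⟨s', hs', hlb'⟩ := h1.mp ⟨s, rfl, hlb⟩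
      rwa [enc_inj s' s hs'] at hlb'
    rcases hcase with ⟨Z, hZX, hZY⟩ | ⟨Z, hZX, hZY⟩
    · obtain ⟨h1, cA⟩ := hZX
      obtain ⟨h2, cB⟩ := hZY
      exact mux_no_mono p hsol tr d' hd (a : BFunc n) (b : BFunc n) Z h1 h2 cA cB hmA
    · obtain ⟨h1, cA⟩ := hZX
      obtain ⟨h2, cB⟩ := hZY
      exact mux_no_mono' p hsol tr d' hd (a : BFunc n) (b : BFunc n) Z h1 h2 cA cB hmB
  have hcard : Fintype.card (Fin (2 ^ (d' + 1)) → Bool × Bool) = 2 ^ 2 ^ (d' + 2) := by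
    rw [Fintype.card_fun, Fintype.card_prod, Fintype.card_bool, Fintype.card_fin]
    rw [show (2 * 2 : ℕ) = 2 ^ 2 from rfl, ← pow_mul]
    congr 1
    rw [pow_succ]
    ring
  have hcolor : G.Colorable (2 ^ 2 ^ (d' + 2)) :=
    hcard ▸ (SimpleGraph.Coloring.mk col @hvalid).colorable
  have hchle : G.chromaticNumber ≤ ((2 ^ 2 ^ (d' + 2) : ℕ) : ℕ∞) :=
    hcolor.chromaticNumber_le
  have hnetop : G.chromaticNumber ≠ ⊤ := by
    intro h
    rw [h] at hchle
    exact (ENat.coe_lt_top _).not_ge hchle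
  have hNle : G.chromaticNumber.toNat ≤ 2 ^ 2 ^ (d' + 2) := by
    rwa [← ENat.coe_toNat hnetop, Nat.cast_le] at hchle
  have hN2 : 2 ≤ G.chromaticNumber.toNat := by
    rw [← ENat.coe_toNat hnetop] at hchi
    exact_mod_cast hchi
  set N : ℕ := G.chromaticNumber.toNat with hN
  have hN2R : (2 : ℝ) ≤ (N : ℝ) := by exact_mod_cast hN2
  have hlog1 : (1 : ℝ) ≤ Real.logb 2 (N : ℝ) := by
    rw [show (1 : ℝ) = Real.logb 2 2 from (Real.logb_self_eq_one (by norm_num)).symm]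
    exact Real.logb_le_logb_of_le (by norm_num) (by norm_num) hN2R
  have hNleR : (N : ℝ) ≤ (2 : ℝ) ^ (2 ^ (d' + 2) : ℕ) := by
    have : ((2 ^ 2 ^ (d' + 2) : ℕ) : ℝ) = (2 : ℝ) ^ (2 ^ (d' + 2) : ℕ) := by push_cast; ring
    rw [← this]
    exact_mod_cast hNle
  have hlogNle : Real.logb 2 (N : ℝ) ≤ ((2 ^ (d' + 2) : ℕ) : ℝ) := by
    calc Real.logb 2 (N : ℝ) ≤ Real.logb 2 ((2 : ℝ) ^ (2 ^ (d' + 2) : ℕ)) :=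
          Real.logb_le_logb_of_le (by norm_num) (by positivity) hNleR
      _ = ((2 ^ (d' + 2) : ℕ) : ℝ) * Real.logb 2 2 := Real.logb_pow 2 2 _
      _ = ((2 ^ (d' + 2) : ℕ) : ℝ) := by
          rw [Real.logb_self_eq_one (by norm_num)]; ring
  have hloglog : Real.logb 2 (Real.logb 2 (N : ℝ)) ≤ (d' : ℝ) + 2 := by
    calc Real.logb 2 (Real.logb 2 (N : ℝ))
        ≤ Real.logb 2 (((2 ^ (d' + 2) : ℕ) : ℝ)) :=
          Real.logb_le_logb_of_le (by norm_num) (by linarith) hlogNle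
      _ = Real.logb 2 ((2 : ℝ) ^ (d' + 2 : ℕ)) := by push_cast; ring_nf
      _ = ((d' + 2 : ℕ) : ℝ) * Real.logb 2 2 := Real.logb_pow 2 2 _
      _ = (d' : ℝ) + 2 := by
          rw [Real.logb_self_eq_one (by norm_num)]; push_cast; ring
  have hsum : (tr.length : ℝ) + (d' : ℝ) = (p.depth : ℝ) := by
    have : tr.length + d' = p.depth := by omega
    exact_mod_cast this
  linarith
end

section
/- For every finite graph G=(V,E) with at least one edge, log₂ log₂ χ(G) ≤ NCC(GraphIneq_G) ≤ log₂ log₂ χ(G) + 1. -/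
private lemma sq_le_two_pow_aux : ∀ k : ℕ, 12 ≤ k → (k + 1) ^ 2 ≤ 2 ^ (k - 1) := by
  intro k hk
  induction k with
  | zero => omega
  | succ n ih =>
    rcases Nat.lt_or_ge n 12 with h | h
    · interval_cases n <;> first | omega | norm_num
    · have h1 := ih (by omega)
      have h2 : n + 1 - 1 + 1 = n + 1 - 0 := by omega
      have : (n + 2) ^ 2 ≤ 2 * (n + 1) ^ 2 := by nlinarith
      calc (n + 1 + 1) ^ 2 ≤ 2 * (n + 1) ^ 2 := this
        _ ≤ 2 * 2 ^ (n - 1) := by omega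
        _ = 2 ^ (n - 1 + 1) := by ring
        _ ≤ 2 ^ (n + 1 - 1) := Nat.pow_le_pow_right (by norm_num) (by omega)

private lemma two_pow_le_central : ∀ k : ℕ, 2 ^ k ≤ (k + 1) * k.choose (k / 2) := by
  intro k
  calc 2 ^ k = ∑ i ∈ Finset.range (k + 1), k.choose i := (Nat.sum_range_choose k).symm
    _ ≤ (Finset.range (k+1)).card • k.choose (k / 2) :=
        Finset.sum_le_card_nsmul _ _ _ (fun i _ => Nat.choose_le_middle i k)
    _ = (k + 1) * k.choose (k / 2) := by simp [Finset.card_range]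

private lemma central_bound : ∀ k : ℕ, 2 ≤ k → 2 ^ (k + 1) ≤ (k.choose (k / 2) + 1) ^ 2 := by
  intro k hk
  rcases Nat.lt_or_ge k 12 with h | h
  · interval_cases k <;> decide
  · set B := k.choose (k / 2) with hB
    have h1 : 2 ^ k ≤ (k + 1) * B := two_pow_le_central k
    have h2 : (k + 1) ^ 2 ≤ 2 ^ (k - 1) := sq_le_two_pow_aux k h
    have key : (k+1)^2 * 2 ^ (k + 1) ≤ (k+1)^2 * B ^ 2 := by
      calc (k+1)^2 * 2 ^ (k + 1) ≤ 2 ^ (k-1) * 2 ^ (k+1) := Nat.mul_le_mul_right _ h2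
        _ = 2 ^ (k - 1 + (k + 1)) := (pow_add 2 _ _).symm
        _ = 2 ^ k * 2 ^ k := by rw [← pow_add]; congr 1; omega
        _ ≤ ((k + 1) * B) * ((k + 1) * B) := Nat.mul_le_mul h1 h1
        _ = (k+1)^2 * B^2 := by ring
    have : 2 ^ (k + 1) ≤ B ^ 2 := Nat.le_of_mul_le_mul_left key (by positivity)
    calc 2 ^ (k+1) ≤ B ^ 2 := this
      _ ≤ (B+1)^2 := Nat.pow_le_pow_left (by omega) 2


private lemma graphIneqProt_of_coloring {V : Type} {c k : ℕ} (G : SimpleGraph V)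
    (C : G.Coloring (Fin c)) (hck : c ≤ k.choose (k / 2)) : GraphIneqProt G k := by
  have hcard : Fintype.card (Fin c) ≤ Fintype.card {s : Finset (Fin k) // s.card = k / 2} := by
    rw [Fintype.card_finset_len, Fintype.card_fin, Fintype.card_fin]
    exact hck
  obtain ⟨φ⟩ := Function.Embedding.nonempty_of_card_le hcard
  refine ⟨fun v w => decide (w ∈ (φ (C v)).1), fun v w => decide (w ∉ (φ (C v)).1), ?_, ?_⟩
  · intro u v huv
    have hCne : C u ≠ C v := C.valid huv
    have hSne : (φ (C u)).1 ≠ (φ (C v)).1 := by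
      intro h
      exact hCne (φ.injective (Subtype.ext h))
    have hns : ¬ (φ (C u)).1 ⊆ (φ (C v)).1 := by
      intro hsub
      exact hSne (Finset.eq_of_subset_of_card_le hsub (by rw [(φ (C u)).2, (φ (C v)).2]))
    obtain ⟨w, hw1, hw2⟩ := Finset.not_subset.mp hns
    exact ⟨w, by simpa using hw1, by simpa using hw2⟩
  · rintro v ⟨w, hw1, hw2⟩
    simp at hw1 hw2
    exact hw2 hw1

private lemma chromNat_le_pow {V : Type} [Fintype V] {G : SimpleGraph V} {k : ℕ}
    (h : GraphIneqProt G k) : G.chromaticNumber.toNat ≤ 2 ^ k := by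
  obtain ⟨a, b, hadj, hdiag⟩ := h
  have hvalid : ∀ {u v : V}, G.Adj u v → a u ≠ a v := by
    intro u v huv hEq
    obtain ⟨w, hw1, hw2⟩ := hadj u v huv
    exact hdiag v ⟨w, by rw [← hEq]; exact hw1, hw2⟩
  have C : G.Coloring (Fin k → Bool) := SimpleGraph.Coloring.mk a hvalid
  have hcol : G.Colorable (2 ^ k) := by
    have := C.colorable
    simpa using this
  have hle : G.chromaticNumber ≤ (2 ^ k : ℕ) := hcol.chromaticNumber_le
  have hne : G.chromaticNumber ≠ ⊤ := (lt_of_le_of_lt hle (WithTop.coe_lt_top _)).ne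
  rw [← ENat.coe_toNat hne, Nat.cast_le] at hle
  exact hle

theorem statement7 {V : Type} [Fintype V] (G : SimpleGraph V) (hE : ∃ u v, G.Adj u v) :
    Real.logb 2 (Real.logb 2 ((G.chromaticNumber.toNat : ℝ))) ≤
        Real.logb 2 (NCCgraphIneqCard G) ∧
      Real.logb 2 (NCCgraphIneqCard G) ≤
        Real.logb 2 (Real.logb 2 ((G.chromaticNumber.toNat : ℝ))) + 1 := by
  obtain ⟨u0, v0, huv0⟩ := hE
  set c := G.chromaticNumber.toNat with hc
  have hcol : G.Colorable c := G.colorable_chromaticNumber_of_fintype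
  obtain ⟨C⟩ := hcol
  -- c ≥ 2
  have hc2 : 2 ≤ c := by
    have hne : C u0 ≠ C v0 := C.valid huv0
    have : Nontrivial (Fin c) := ⟨_, _, hne⟩
    have := Fintype.one_lt_card_iff_nontrivial.mpr this
    simp at this; omega
  -- choose k
  set k := Nat.log 2 (c ^ 2) with hk
  have hc2pos : c ^ 2 ≠ 0 := by positivity
  have hk1 : 2 ^ k ≤ c ^ 2 := Nat.pow_log_le_self 2 hc2pos
  have hk2 : c ^ 2 < 2 ^ (k + 1) := Nat.lt_pow_succ_log_self (by norm_num) _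
  have hk3 : 2 ≤ k := by
    rw [hk, Nat.le_log_iff_pow_le (by norm_num) hc2pos]
    nlinarith
  have hcB : c ≤ k.choose (k / 2) := by
    by_contra hcon
    push_neg at hcon
    have : (k.choose (k / 2) + 1) ^ 2 ≤ c ^ 2 := Nat.pow_le_pow_left (by omega) 2
    have := central_bound k hk3
    omega
  have hprot : GraphIneqProt G k := graphIneqProt_of_coloring G C hcB
  have hkmem : k ∈ {k | 1 ≤ k ∧ GraphIneqProt G k} := ⟨by omega, hprot⟩
  have hSne : {k | 1 ≤ k ∧ GraphIneqProt G k}.Nonempty := ⟨k, hkmem⟩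
  set k0 := NCCgraphIneqCard G with hk0def
  have hk0mem : k0 ∈ {k | 1 ≤ k ∧ GraphIneqProt G k} := Nat.sInf_mem hSne
  have hk01 : 1 ≤ k0 := hk0mem.1
  have hk0le : k0 ≤ k := Nat.sInf_le hkmem
  have hchr : c ≤ 2 ^ k0 := chromNat_le_pow hk0mem.2
  -- real arithmetic
  have hcR : (2 : ℝ) ≤ (c : ℝ) := by exact_mod_cast hc2
  have hLpos : (1 : ℝ) ≤ Real.logb 2 c := by
    calc (1 : ℝ) = Real.logb 2 2 := (Real.logb_self_eq_one (by norm_num)).symm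
      _ ≤ Real.logb 2 c := Real.logb_le_logb_of_le (by norm_num) (by norm_num) hcR
  have hk0R : (1 : ℝ) ≤ (k0 : ℝ) := by exact_mod_cast hk01
  constructor
  · -- lower bound
    have h1 : Real.logb 2 c ≤ (k0 : ℝ) := by
      calc Real.logb 2 c ≤ Real.logb 2 ((2 : ℝ) ^ k0) :=
            Real.logb_le_logb_of_le (by norm_num) (by linarith) (by exact_mod_cast hchr)
        _ = (k0 : ℝ) := by
            rw [Real.logb_pow, Real.logb_self_eq_one (by norm_num)]; ring
    exact Real.logb_le_logb_of_le (by norm_num) (by linarith) h1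
  · -- upper bound
    have hkR : (k : ℝ) ≤ 2 * Real.logb 2 c := by
      have h1 : Real.logb 2 ((2:ℝ) ^ k) ≤ Real.logb 2 ((c:ℝ) ^ 2) :=
        Real.logb_le_logb_of_le (by norm_num) (by positivity) (by exact_mod_cast hk1)
      rwa [Real.logb_pow, Real.logb_pow, Real.logb_self_eq_one (by norm_num), mul_one,
        Nat.cast_ofNat] at h1
    calc Real.logb 2 (k0 : ℝ) ≤ Real.logb 2 (2 * Real.logb 2 c) := by
          apply Real.logb_le_logb_of_le (by norm_num) (by linarith)
          calc (k0 : ℝ) ≤ (k : ℝ) := by exact_mod_cast hk0le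
            _ ≤ 2 * Real.logb 2 c := hkR
      _ = Real.logb 2 (Real.logb 2 c) + 1 := by
          rw [Real.logb_mul (by norm_num) (by linarith), Real.logb_self_eq_one (by norm_num)]
          ring
end

section
/- For all finite sets X, Y and every function f:X×Y→{0,1} that attains both values 0 and 1, it holds that NCC(f) ≤ 2^{coNCC(f)}. -/
lemma trivialND {X Y : Type} [Fintype X] [Fintype Y] (g : X × Y → Bool) :
    NDProtFor g (Fintype.card (X × Y)) := by
  classical
  set e := (Fintype.equivFin (X × Y)).symm with he
  refine ⟨fun x w => decide ((e w).1 = x ∧ g (e w) = true),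
    fun y w => decide ((e w).2 = y), fun x y => ?_⟩
  constructor
  · intro hg
    refine ⟨e.symm (x, y), ?_, ?_⟩ <;> simp [hg]
  · rintro ⟨w, hw1, hw2⟩
    simp only [decide_eq_true_eq] at hw1 hw2
    have : e w = (x, y) := Prod.ext hw1.1 hw2
    rw [← this]; exact hw1.2

theorem statement8 {X Y : Type} [Fintype X] [Fintype Y] (f : X × Y → Bool)
    (h1 : ∃ p, f p = true) (h0 : ∃ p, f p = false) :
    Real.logb 2 (NCCcard f) ≤ (2 : ℝ) ^ Real.logb 2 (NCCcard fun p => !f p) := by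
  classical
  obtain ⟨p1, hp1⟩ := h1
  have hX : Nonempty X := ⟨p1.1⟩
  have hY : Nonempty Y := ⟨p1.2⟩
  have hcard : 1 ≤ Fintype.card (X × Y) := Fintype.card_pos
  -- the co-nondeterministic complexity is attained
  have hne : {k | 1 ≤ k ∧ NDProtFor (fun p => !f p) k}.Nonempty :=
    ⟨Fintype.card (X × Y), hcard, trivialND _⟩
  set k' := NCCcard (fun p => !f p) with hk'def
  have hmem := Nat.sInf_mem hne
  obtain ⟨hk'1, a', b', hab⟩ : 1 ≤ k' ∧ NDProtFor (fun p => !f p) k' := hmem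
  -- build a protocol for f with witness set of size 2^k'
  have hcard2 : Fintype.card (Fin k' → Bool) = 2 ^ k' := by simp
  set e : (Fin k' → Bool) ≃ Fin (2 ^ k') := Fintype.equivFinOfCardEq hcard2 with hedef
  have hprot : NDProtFor f (2 ^ k') := by
    refine ⟨fun x w => decide (e.symm w = fun i => a' x i),
      fun y w => decide (∀ i, e.symm w i = true → b' y i = false), fun x y => ?_⟩
    constructor
    · intro hf
      refine ⟨e (fun i => a' x i), by simp, ?_⟩
      simp only [Equiv.symm_apply_apply, decide_eq_true_eq]
      intro i hi
      by_contra hb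
      have hb' : b' y i = true := by
        cases hbe : b' y i
        · exact absurd hbe hb
        · rfl
      have : (fun p => !f p) (x, y) = true := (hab x y).mpr ⟨i, hi, hb'⟩
      simp [hf] at this
    · rintro ⟨w, hw1, hw2⟩
      simp only [decide_eq_true_eq] at hw1 hw2
      by_contra hf
      have hf' : f (x, y) = false := by
        cases hfe : f (x, y)
        · rfl
        · exact absurd hfe hf
      have : (fun p => !f p) (x, y) = true := by simp [hf']
      obtain ⟨i, hi, hbi⟩ := (hab x y).mp this
      have : e.symm w i = true := by rw [hw1]; exact hi
      have := hw2 i this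
      rw [hbi] at this
      exact absurd this (by simp)
  -- bound NCCcard f
  have hle : NCCcard f ≤ 2 ^ k' := Nat.sInf_le ⟨Nat.one_le_two_pow, hprot⟩
  have hk1 : 1 ≤ NCCcard f := by
    have : NCCcard f ∈ {k | 1 ≤ k ∧ NDProtFor f k} :=
      Nat.sInf_mem ⟨Fintype.card (X × Y), hcard, trivialND _⟩
    exact this.1
  -- arithmetic
  have hk'pos : (0 : ℝ) < (k' : ℝ) := by exact_mod_cast hk'1
  rw [Real.rpow_logb (by norm_num) (by norm_num) hk'pos]
  have h2 : Real.logb 2 (NCCcard f) ≤ Real.logb 2 ((2 : ℝ) ^ (k' : ℕ)) := by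
    apply Real.logb_le_logb_of_le (by norm_num) (by exact_mod_cast hk1)
    exact_mod_cast hle
  calc Real.logb 2 (NCCcard f) ≤ Real.logb 2 ((2 : ℝ) ^ (k' : ℕ)) := h2
    _ = (k' : ℝ) := by
        rw [← Real.rpow_natCast, Real.logb_rpow (by norm_num) (by norm_num)]
end

section
/- Let Σ be a finite alphabet of size q, let m∈ℕ, and let X,Y ⊆ Σ^m both be prefix thick with degree q/2. Then X∩Y ≠ ∅. -/
theorem statement9 {m : ℕ} {A : Type} [Fintype A] (X Y : Set (Fin m → A))
    (hX : RowThick X ((Fintype.card A : ℝ) / 2))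
    (hY : RowThick Y ((Fintype.card A : ℝ) / 2)) :
    (X ∩ Y).Nonempty := by
  obtain ⟨X', hX'X, hX'ne, hXthick⟩ := hX
  obtain ⟨Y', hY'Y, hY'ne, hYthick⟩ := hY
  have key : ∀ k : ℕ, k ≤ m →
      ∃ y ∈ X', ∃ z ∈ Y', ∀ j : Fin m, (j : ℕ) < k → y j = z j := by
    intro k
    induction k with
    | zero =>
      intro _
      obtain ⟨y, hy⟩ := hX'ne
      obtain ⟨z, hz⟩ := hY'ne
      exact ⟨y, hy, z, hz, fun j hj => absurd hj (Nat.not_lt_zero _)⟩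
    | succ k ih =>
      intro hk
      obtain ⟨y, hy, z, hz, hagree⟩ := ih (Nat.le_of_succ_le hk)
      set i : Fin m := ⟨k, hk⟩ with hi
      have hBX := hXthick y hy i
      have hBY := hYthick z hz i
      set BX := {a : A | ∃ y' ∈ X', (∀ j, j < i → y' j = y j) ∧ y' i = a} with hBXdef
      set BY := {a : A | ∃ z' ∈ Y', (∀ j, j < i → z' j = z j) ∧ z' i = a} with hBYdef
      have hcard : Fintype.card A < BX.ncard + BY.ncard := by
        have : (Fintype.card A : ℝ) < (BX.ncard : ℝ) + (BY.ncard : ℝ) := by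
          linarith
        exact_mod_cast this
      have hinter : (BX ∩ BY).Nonempty := by
        by_contra h
        rw [Set.not_nonempty_iff_eq_empty] at h
        have hd : Disjoint BX BY := Set.disjoint_iff_inter_eq_empty.mpr h
        have hU := Set.ncard_union_eq hd BX.toFinite BY.toFinite
        have hle : (BX ∪ BY).ncard ≤ Fintype.card A := by
          have h1 := Set.ncard_le_ncard (Set.subset_univ (BX ∪ BY)) Set.finite_univ
          simpa [Set.ncard_univ, Nat.card_eq_fintype_card] using h1
        omega
      obtain ⟨a, ⟨y', hy', hyagree, hyi⟩, ⟨z', hz', hzagree, hzi⟩⟩ := hinter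
      refine ⟨y', hy', z', hz', ?_⟩
      intro j hj
      rcases Nat.lt_succ_iff_lt_or_eq.mp hj with h | h
      · have hji : j < i := by simpa [Fin.lt_def, hi] using h
        rw [hyagree j hji, hzagree j hji]
        exact hagree j h
      · have hj' : j = i := Fin.ext h
        rw [hj', hyi, hzi]
  obtain ⟨y, hy, z, hz, hagree⟩ := key m le_rfl
  have hyz : y = z := funext fun j => hagree j j.isLt
  exact ⟨y, hX'X hy, hyz ▸ hY'Y hz⟩
end

section
/- Let Σ₁,…,Σ_m be finite alphabets, and let X,Y ⊆ Σ₁×⋯×Σ_m be sets each of which contains a nonempty subset whose prefix tree has the property that every vertex at depth i < m has more than |Σ_{i+1}|/2 children. Then X∩Y ≠ ∅. -/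
lemma inter_ne {α : Type*} [Fintype α] {s t : Set α}
    (h : (Fintype.card α : ℝ) < s.ncard + t.ncard) : (s ∩ t).Nonempty := by
  have hs : s.Finite := Set.toFinite s
  have ht : t.Finite := Set.toFinite t
  have hunion : (s ∪ t).ncard ≤ Fintype.card α := by
    simpa [Set.ncard_univ, Nat.card_eq_fintype_card] using
      Set.ncard_le_ncard (Set.subset_univ (s ∪ t)) Set.finite_univ
  have key : s.ncard + t.ncard = (s ∪ t).ncard + (s ∩ t).ncard :=
    (Set.ncard_union_add_ncard_inter s t hs ht).symm
  have : 0 < (s ∩ t).ncard := by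
    by_contra h0
    push_neg at h0
    interval_cases h' : (s ∩ t).ncard
    · have : s.ncard + t.ncard ≤ Fintype.card α := by omega
      exact absurd h (by exact_mod_cast not_lt.mpr (by exact_mod_cast this))
  rw [Set.nonempty_iff_ne_empty]
  intro he
  rw [he] at this
  simp at this

theorem statement10 {m : ℕ} {A : Fin m → Type} [∀ i, Fintype (A i)]
    (X Y : Set (∀ i, A i))
    (hX : DepThick X fun i => (Fintype.card (A i) : ℝ) / 2)
    (hY : DepThick Y fun i => (Fintype.card (A i) : ℝ) / 2) :
    (X ∩ Y).Nonempty := by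
  obtain ⟨X', hXsub, hXne, hXdeg⟩ := hX
  obtain ⟨Y', hYsub, hYne, hYdeg⟩ := hY
  -- claim: for each k, there are x ∈ X', y ∈ Y' agreeing on coordinates < k
  have key : ∀ k : ℕ, k ≤ m → ∃ x ∈ X', ∃ y ∈ Y', ∀ i : Fin m, (i : ℕ) < k → x i = y i := by
    intro k
    induction k with
    | zero => intro _; obtain ⟨x, hx⟩ := hXne; obtain ⟨y, hy⟩ := hYne
              exact ⟨x, hx, y, hy, fun i hi => absurd hi (by omega)⟩
    | succ k ih =>
      intro hk
      obtain ⟨x, hx, y, hy, hagree⟩ := ih (by omega)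
      set i : Fin m := ⟨k, by omega⟩ with hi
      set SX : Set (A i) := {a | ∃ z ∈ X', (∀ j, j < i → z j = x j) ∧ z i = a} with hSX
      set SY : Set (A i) := {a | ∃ z ∈ Y', (∀ j, j < i → z j = y j) ∧ z i = a} with hSY
      have h1 := hXdeg x hx i
      have h2 := hYdeg y hy i
      have hint : (SX ∩ SY).Nonempty := by
        apply inter_ne
        simp only at h1 h2
        linarith
      obtain ⟨a, haX, haY⟩ := hint
      obtain ⟨x', hx', hx'agree, hx'a⟩ := haX
      obtain ⟨y', hy', hy'agree, hy'a⟩ := haY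
      refine ⟨x', hx', y', hy', fun j hj => ?_⟩
      rcases lt_or_eq_of_le (Nat.lt_succ_iff.mp hj) with h | h
      · have hji : j < i := h
        rw [hx'agree j hji, hy'agree j hji, hagree j h]
      · have : j = i := Fin.ext h
        subst this
        rw [hx'a, hy'a]
  obtain ⟨x, hx, y, hy, hagree⟩ := key m le_rfl
  have hxy : x = y := funext fun i => hagree i i.isLt
  exact ⟨x, hXsub hx, hxy ▸ hYsub hy⟩
end

section
/- Let Σ be a finite alphabet of size q, let m∈ℕ and X ⊆ Σ^{m+1}. For σ∈Σ let X_σ = {x∈Σ^m : σ∘x ∈ X} (the strings obtained from strings of X beginning with σ by deleting the first symbol), and for w∈{1,…,q}^m let c_w be the number of symbols σ∈Σ with w∈W(X_σ). Then for every k∈{1,…,q} and every w∈{1,…,q}^m: the vector k∘w (k prepended to w) belongs to W(X) if and only if k ≤ c_w. -/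
private lemma cut_set {m : ℕ} {A : Type} (S' : Set (Fin (m + 1) → A))
    (x' : Fin (m + 1) → A) (i' : Fin m) :
    {a : A | ∃ y ∈ S', (∀ j, j < i'.succ → y j = x' j) ∧ y i'.succ = a} =
    {a : A | ∃ y ∈ {t : Fin m → A | Fin.cons (x' 0) t ∈ S'},
      (∀ j, j < i' → y j = Fin.tail x' j) ∧ y i' = a} := by
  ext a
  constructor
  · rintro ⟨y, hyS, hagree, hyi⟩
    have h0 : y 0 = x' 0 := hagree 0 (Fin.succ_pos i')
    refine ⟨Fin.tail y, ?_, ?_, hyi⟩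
    · show Fin.cons (x' 0) (Fin.tail y) ∈ S'
      rw [← h0, Fin.cons_self_tail]; exact hyS
    · intro j hj
      exact hagree j.succ (by simpa [Fin.succ_lt_succ_iff] using hj)
  · rintro ⟨t, htS, hagree, hti⟩
    refine ⟨Fin.cons (x' 0) t, htS, ?_, by simpa using hti⟩
    intro j
    refine Fin.cases ?_ ?_ j
    · intro _; simp
    · intro j' hj'
      have hj'' : j' < i' := by simpa [Fin.succ_lt_succ_iff] using hj'
      simpa [Fin.cons_succ, Fin.tail] using hagree j' hj''

private lemma zero_set {m : ℕ} {A : Type} (S' : Set (Fin (m + 1) → A))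
    (x' : Fin (m + 1) → A) :
    {a : A | ∃ y ∈ S', (∀ j, j < (0 : Fin (m + 1)) → y j = x' j) ∧ y 0 = a} =
    {a : A | ∃ y ∈ S', y 0 = a} := by
  ext a
  simp [Fin.not_lt_zero]

theorem statement12 {m : ℕ} {A : Type} [Fintype A] (X : Set (Fin (m + 1) → A))
    (w : Fin m → ℕ) (k : ℕ) (hk1 : 1 ≤ k) (hkq : k ≤ Fintype.card A) :
    Fin.cons k w ∈ WinSet X ↔
      k ≤ ({σ : A | w ∈ WinSet {x : Fin m → A | Fin.cons σ x ∈ X}}).ncard := by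
  constructor
  · rintro ⟨S', hS'X, ⟨x₀, hx₀⟩, hbr⟩
    set T0 : Set A := {a : A | ∃ y ∈ S', y 0 = a} with hT0
    have hT0card : T0.ncard = k := by
      have := hbr x₀ hx₀ 0
      rw [zero_set] at this
      simpa using this
    have hsub : T0 ⊆ {σ : A | w ∈ WinSet {x : Fin m → A | Fin.cons σ x ∈ X}} := by
      rintro σ ⟨y, hyS, hy0⟩
      refine ⟨{t : Fin m → A | Fin.cons σ t ∈ S'}, ?_, ?_, ?_⟩
      · intro t ht; exact hS'X ht
      · refine ⟨Fin.tail y, ?_⟩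
        show Fin.cons σ (Fin.tail y) ∈ S'
        rw [← hy0, Fin.cons_self_tail]; exact hyS
      · intro x hx i'
        have := hbr (Fin.cons σ x) hx i'.succ
        rw [cut_set] at this
        simpa [Fin.cons_succ, Fin.cons_zero, Fin.tail_cons] using this
    calc k = T0.ncard := hT0card.symm
      _ ≤ _ := Set.ncard_le_ncard hsub (Set.toFinite _)
  · intro hk
    obtain ⟨T', hT'sub, hT'card⟩ := Set.exists_subset_card_eq hk
    have hch : ∀ σ : A, ∃ S'' : Set (Fin m → A), σ ∈ T' →
        (S'' ⊆ {x : Fin m → A | Fin.cons σ x ∈ X} ∧ S''.Nonempty ∧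
          ∀ x ∈ S'', ∀ i : Fin m,
            ({a : A | ∃ y ∈ S'', (∀ j, j < i → y j = x j) ∧ y i = a}).ncard = w i) := by
      intro σ
      by_cases h : σ ∈ T'
      · obtain ⟨S'', h1, h2, h3⟩ := hT'sub h
        exact ⟨S'', fun _ => ⟨h1, h2, h3⟩⟩
      · exact ⟨∅, fun h' => absurd h' h⟩
    choose F hF using hch
    set S' : Set (Fin (m + 1) → A) :=
      {z : Fin (m + 1) → A | z 0 ∈ T' ∧ Fin.tail z ∈ F (z 0)} with hS'def
    have hmem : ∀ (σ : A) (t : Fin m → A), Fin.cons σ t ∈ S' ↔ σ ∈ T' ∧ t ∈ F σ := by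
      intro σ t
      simp [hS'def, Fin.cons_zero, Fin.tail_cons]
    have hT'ne : T'.Nonempty := by
      rw [← Set.ncard_pos (Set.toFinite _), hT'card]; omega
    have hfirst : {a : A | ∃ y ∈ S', y 0 = a} = T' := by
      ext σ
      constructor
      · rintro ⟨y, hyS, rfl⟩; exact hyS.1
      · intro hσ
        obtain ⟨t, ht⟩ := (hF σ hσ).2.1
        exact ⟨Fin.cons σ t, (hmem σ t).2 ⟨hσ, ht⟩, Fin.cons_zero _ _⟩
    refine ⟨S', ?_, ?_, ?_⟩
    · rintro z ⟨hz0, hzt⟩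
      have := (hF (z 0) hz0).1 hzt
      rw [Set.mem_setOf_eq, Fin.cons_self_tail] at this
      exact this
    · obtain ⟨σ, hσ⟩ := hT'ne
      obtain ⟨t, ht⟩ := (hF σ hσ).2.1
      exact ⟨Fin.cons σ t, (hmem σ t).2 ⟨hσ, ht⟩⟩
    · intro x hx i
      refine Fin.cases ?_ ?_ i
      · rw [zero_set, hfirst, hT'card]
        simp
      · intro i'
        rw [cut_set]
        have hx0 : x 0 ∈ T' := hx.1
        have heq : {t : Fin m → A | Fin.cons (x 0) t ∈ S'} = F (x 0) := by
          ext t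
          rw [Set.mem_setOf_eq, hmem]
          exact ⟨fun h => h.2, fun h => ⟨hx0, h⟩⟩
        rw [heq]
        have := (hF (x 0) hx0).2.2 (Fin.tail x) hx.2 i'
        simpa [Fin.cons_succ] using this
end
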